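/- Let M be an indecomposable KG-module with vertex Q, and let H ≤ G be a subgroup containing no G-conjugate of Q. Then the Auslander–Reiten sequence 0 → Ω²(M) → N → M → 0 terminating in M splits upon restriction to H. -/

import Mathlib

open CategoryTheory MonoidalCategory Limits

noncomputable section

namespace AlgMod

variable (k G : Type) [Field k] [Group G]

instance : HasBinaryBiproducts (FDRep k G) := HasBinaryBiproducts.of_hasBinaryProducts
instance : HasFiniteBiproducts (FDRep k G) := HasFiniteBiproducts.of_hasFiniteProducts

variable {k G}

/-- `X` is a direct summand of `Y`. -/
def IsSummand (X Y : FDRep k G) : Prop :=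
  ∃ Z : FDRep k G, Nonempty (Y ≅ X ⊞ Z)

/-- An indecomposable module: nonzero, and in any biproduct decomposition one factor is zero. -/
def Indec (M : FDRep k G) : Prop :=
  ¬ IsZero M ∧ ∀ X Z : FDRep k G, Nonempty (M ≅ X ⊞ Z) → IsZero X ∨ IsZero Z

/-- `tpow M n` is the `n`-th tensor power `M^{⊗n}` of `M`. -/
def tpow (M : FDRep k G) : ℕ → FDRep k G
  | 0 => 𝟙_ (FDRep k G)
  | n + 1 => tpow M n ⊗ M

/-- A module is algebraic iff only finitely many isomorphism classes of indecomposable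
modules occur as direct summands of its tensor powers. -/
def Algebraic (M : FDRep k G) : Prop :=
  ∃ L : List (FDRep k G), ∀ N : FDRep k G, Indec N →
    (∃ n : ℕ, 1 ≤ n ∧ IsSummand N (tpow M n)) → ∃ N' ∈ L, Nonempty (N ≅ N')

/-- A module with no nonzero projective direct summands. -/
def ProjFree (M : FDRep k G) : Prop :=
  ∀ Q : FDRep k G, Projective Q → IsSummand Q M → IsZero Q

/-- `N` is the projective-free part `Ω⁰(M)` of `M`. -/
def IsProjFreePart (N M : FDRep k G) : Prop :=
  ProjFree N ∧ ∃ Q : FDRep k G, Projective Q ∧ Nonempty (M ≅ N ⊞ Q)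

/-- A short exact sequence `0 → A → B → C → 0` of representations. -/
def SES {A B C : FDRep k G} (f : A ⟶ B) (g : B ⟶ C) : Prop :=
  Function.Injective f.hom ∧ Function.Surjective g.hom ∧
    ∀ b : B.V, g.hom b = 0 ↔ ∃ a : A.V, f.hom a = b

/-- Heller operator data: `Ω i M` is the `i`-th Heller translate of `M` (projective-free by
convention, so that `Ω 0 M = Ω⁰(M)` is the projective-free part of `M`), and `P i M` is the
projective cover of `Ω i M`, so `0 → Ω (i+1) M → P i M → Ω i M → 0` is exact.  Minimality of
the covers is encoded by the kernels being projective-free. -/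
structure Heller (k G : Type) [Field k] [Group G] where
  Ω : ℤ → FDRep k G → FDRep k G
  P : ℤ → FDRep k G → FDRep k G
  P_projective : ∀ (i : ℤ) (M : FDRep k G), Projective (P i M)
  Ω_projFree : ∀ (i : ℤ) (M : FDRep k G), ProjFree (Ω i M)
  Ω_zero : ∀ M : FDRep k G, IsProjFreePart (Ω 0 M) M
  ses : ∀ (i : ℤ) (M : FDRep k G), ∃ (f : Ω (i + 1) M ⟶ P i M) (g : P i M ⟶ Ω i M), SES f g

/-- A module is periodic if some positive Heller translate is isomorphic to it
(modulo projectives). -/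
def Periodic (h : Heller k G) (M : FDRep k G) : Prop :=
  ∃ n : ℕ, 1 ≤ n ∧ Nonempty (h.Ω n M ≅ h.Ω 0 M)

/-- The restriction of a representation to a subgroup. -/
def res (H : Subgroup G) (M : FDRep k G) : FDRep k ↥H :=
  (Action.res (FGModuleCat k) H.subtype).obj M


/-- Carrier of the module induced from a representation of the subgroup `H` of the finite
group `G` (realised as the coinduced module, which is isomorphic to the induced module
since `G` is finite). -/
def indV [Fintype G] (H : Subgroup G) (M : FDRep k ↥H) : Submodule k (G → M) where
  carrier := {f | ∀ (h : ↥H) (g : G), f (↑h * g) = M.ρ h (f g)}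
  add_mem' := by intro a b ha hb h g; simp [ha h g, hb h g]
  zero_mem' := by intro h g; simp
  smul_mem' := by intro c a ha h g; simp [ha h g]

/-- The `G`-action on the induced module: `(g • f) x = f (x * g)`. -/
def indρ [Fintype G] (H : Subgroup G) (M : FDRep k ↥H) :
    Representation k G (indV H M) where
  toFun g :=
    { toFun := fun f => ⟨fun x => f.1 (x * g), fun h x => by
        simpa [mul_assoc] using f.2 h (x * g)⟩
      map_add' := fun a b => by ext x; rfl
      map_smul' := fun c a => by ext x; rfl }
  map_one' := by ext f x; simp
  map_mul' := fun g₁ g₂ => by ext f x; simp [mul_assoc]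

/-- The module `M↑G` induced from the representation `M` of a subgroup `H ≤ G`. -/
def ind [Fintype G] (H : Subgroup G) (M : FDRep k ↥H) : FDRep k G :=
  FDRep.of (indρ H M)

/-- `M` is relatively `Q`-projective: it is a direct summand of a module induced from `Q`. -/
def RelProj [Fintype G] (M : FDRep k G) (Q : Subgroup G) : Prop :=
  ∃ S : FDRep k ↥Q, IsSummand M (ind Q S)

/-- `Q` is a vertex of `M`: a minimal subgroup relative to which `M` is projective. -/
def IsVertex [Fintype G] (M : FDRep k G) (Q : Subgroup G) : Prop :=
  RelProj M Q ∧ ∀ Q' : Subgroup G, Q' ≤ Q → RelProj M Q' → Q' = Q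

/-- `0 → A → E → M → 0` is an almost-split (Auslander–Reiten) sequence: a non-split short
exact sequence such that every map to `M` which is not a split epimorphism factors through
`E → M`. -/
def AlmostSplit {A E M : FDRep k G} (f : A ⟶ E) (g : E ⟶ M) : Prop :=
  SES f g ∧ (¬ ∃ s : M ⟶ E, s ≫ g = 𝟙 M) ∧
    ∀ (X : FDRep k G) (u : X ⟶ M), (¬ ∃ s : M ⟶ X, s ≫ u = 𝟙 M) → ∃ v : X ⟶ E, v ≫ g = u

/-- conjugated endomorphism -/
def cj (M : FDRep k G) (x : G) (φ : Module.End k M) : Module.End k M :=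
  (M.ρ x⁻¹) * φ * (M.ρ x)

lemma cj_cj (M : FDRep k G) (x y : G) (φ : Module.End k M) :
    cj M y (cj M x φ) = cj M (x * y) φ := by
  simp only [cj, mul_inv_rev, map_mul, mul_assoc]

lemma cj_one (M : FDRep k G) (φ : Module.End k M) : cj M 1 φ = φ := by
  simp [cj]

lemma cj_mul (M : FDRep k G) (x : G) (φ ψ : Module.End k M) :
    cj M x (φ * ψ) = cj M x φ * cj M x ψ := by
  simp only [cj, mul_assoc]
  congr 1
  simp [← mul_assoc, ← map_mul]

lemma cj_sum {ι : Type} (s : Finset ι) (M : FDRep k G) (x : G) (φ : ι → Module.End k M) :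
    cj M x (∑ i ∈ s, φ i) = ∑ i ∈ s, cj M x (φ i) := by
  simp only [cj, Finset.mul_sum, Finset.sum_mul]

/-- `φ` commutes with the action of `H`. -/
def HEquiv (M : FDRep k G) (H : Subgroup G) (φ : Module.End k M) : Prop :=
  ∀ h ∈ H, cj M h φ = φ

/-- `φ` commutes with the action of all of `G`. -/
def GEquiv (M : FDRep k G) (φ : Module.End k M) : Prop :=
  ∀ g : G, cj M g φ = φ

lemma GEquiv.hEquiv {M : FDRep k G} {φ : Module.End k M} (h : GEquiv M φ) (H : Subgroup G) :
    HEquiv M H φ := fun g _ => h g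

lemma gEquiv_comm {M : FDRep k G} {φ : Module.End k M} (h : GEquiv M φ) (g : G) :
    φ * (M.ρ g) = (M.ρ g) * φ := by
  have := h g
  simp only [cj] at this
  calc φ * M.ρ g = (M.ρ g * M.ρ g⁻¹) * φ * M.ρ g := by simp [← map_mul]
  _ = M.ρ g * (M.ρ g⁻¹ * φ * M.ρ g) := by simp [mul_assoc]
  _ = M.ρ g * φ := by rw [this]

lemma gEquiv_one (M : FDRep k G) : GEquiv M 1 := by
  intro g; simp [cj, ← map_mul]

lemma gEquiv_mul {M : FDRep k G} {φ ψ : Module.End k M} (hφ : GEquiv M φ) (hψ : GEquiv M ψ) :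
    GEquiv M (φ * ψ) := by
  intro g; rw [cj_mul, hφ g, hψ g]

lemma gEquiv_add {M : FDRep k G} {φ ψ : Module.End k M} (hφ : GEquiv M φ) (hψ : GEquiv M ψ) :
    GEquiv M (φ + ψ) := by
  intro g
  simp only [cj, mul_add, add_mul] at *
  rw [show M.ρ g⁻¹ * φ * M.ρ g = cj M g φ from rfl, show M.ρ g⁻¹ * ψ * M.ρ g = cj M g ψ from rfl,
    hφ g, hψ g]

/-- the endomorphism underlying a morphism -/
def homEnd {M : FDRep k G} (f : M ⟶ M) : Module.End k M := f.hom.hom.hom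

/-- morphisms give `GEquiv` endomorphisms -/
lemma gEquiv_of_hom {M : FDRep k G} (f : M ⟶ M) : GEquiv M (homEnd f) := by
  intro g
  have h : homEnd f ∘ₗ M.ρ g = M.ρ g ∘ₗ homEnd f := by
    have := congrArg (fun x : M.V ⟶ M.V => x.hom.hom) (f.comm g); exact this
  have h' : homEnd f * M.ρ g = M.ρ g * homEnd f := h
  simp only [cj]
  calc M.ρ g⁻¹ * homEnd f * M.ρ g = M.ρ g⁻¹ * (homEnd f * M.ρ g) := by
        rw [mul_assoc]
  _ = M.ρ g⁻¹ * (M.ρ g * homEnd f) := by rw [h']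
  _ = homEnd f := by rw [← mul_assoc, ← map_mul]; simp

abbrev RQ (H : Subgroup G) : Type := Quotient (QuotientGroup.rightRel H)

instance [Fintype G] (H : Subgroup G) : Fintype (RQ H) := Fintype.ofFinite _

lemma conjEq {M : FDRep k G} {H : Subgroup G} {φ : Module.End k M} (hφ : HEquiv M H φ)
    {x y : G} (h : y * x⁻¹ ∈ H) : cj M x φ = cj M y φ := by
  have : y = (y * x⁻¹) * x := by group
  rw [this, ← cj_cj, hφ _ h]

/-- relative trace from `H` to `G` -/
def tr [Fintype G] (M : FDRep k G) (H : Subgroup G) (φ : Module.End k M) : Module.End k M :=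
  ∑ C : RQ H, cj M C.out φ

/-- reindexing equivalence of right cosets -/
def rqMul {H : Subgroup G} (g : G) : RQ H ≃ RQ H where
  toFun := Quotient.map' (· * g) (by
    intro a b hab
    have h := (QuotientGroup.rightRel_apply).mp hab
    exact (QuotientGroup.rightRel_apply).mpr (by simpa [mul_assoc] using h))
  invFun := Quotient.map' (· * g⁻¹) (by
    intro a b hab
    have h := (QuotientGroup.rightRel_apply).mp hab
    exact (QuotientGroup.rightRel_apply).mpr (by simpa [mul_assoc] using h))
  left_inv := by
    refine Quotient.ind fun x => ?_
    show Quotient.map' _ _ (Quotient.map' _ _ (Quotient.mk'' x)) = Quotient.mk'' x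
    simp [Quotient.map'_mk'']
  right_inv := by
    refine Quotient.ind fun x => ?_
    show Quotient.map' _ _ (Quotient.map' _ _ (Quotient.mk'' x)) = Quotient.mk'' x
    simp [Quotient.map'_mk'']

lemma rqMul_out_rel {H : Subgroup G} (g : G) (C : RQ H) :
    ((rqMul g C).out) * (C.out * g)⁻¹ ∈ H := by
  have h1 : rqMul g C = Quotient.mk'' (C.out * g) := by
    conv_lhs => rw [← Quotient.out_eq' C]
    rfl
  have h2 : Quotient.mk'' ((rqMul g C).out) = (Quotient.mk'' (C.out * g) : RQ H) := by
    rw [← h1, Quotient.out_eq']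
  exact (QuotientGroup.rightRel_apply).mp (Quotient.eq''.mp h2.symm)

lemma tr_gequiv [Fintype G] {M : FDRep k G} {H : Subgroup G} {φ : Module.End k M}
    (hφ : HEquiv M H φ) : GEquiv M (tr M H φ) := by
  intro g
  rw [tr, cj_sum]
  have key : ∀ C : RQ H, cj M g (cj M C.out φ) = cj M ((rqMul g C).out) φ := by
    intro C
    rw [cj_cj]
    exact conjEq hφ (rqMul_out_rel g C)
  rw [Finset.sum_congr rfl (fun C _ => key C)]
  exact Fintype.sum_equiv (rqMul g) _ _ (fun C => rfl)

lemma tr_mul_left [Fintype G] {M : FDRep k G} {H : Subgroup G} {β φ : Module.End k M}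
    (hβ : GEquiv M β) : tr M H (β * φ) = β * tr M H φ := by
  rw [tr, tr, Finset.mul_sum]
  refine Finset.sum_congr rfl fun C _ => ?_
  rw [cj_mul, hβ C.out]

lemma tr_mul_right [Fintype G] {M : FDRep k G} {H : Subgroup G} {β φ : Module.End k M}
    (hβ : GEquiv M β) : tr M H (φ * β) = tr M H φ * β := by
  rw [tr, tr, Finset.sum_mul]
  refine Finset.sum_congr rfl fun C _ => ?_
  rw [cj_mul, hβ C.out]


abbrev DQ (H Q : Subgroup G) : Type := DoubleCoset.Quotient (H : Set G) (Q : Set G)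

instance [Fintype G] (H Q : Subgroup G) : Fintype (DQ H Q) :=
  @Fintype.ofFinite _ (Quotient.finite (DoubleCoset.setoid (H : Set G) (Q : Set G)))

/-- the subgroup `g⁻¹Hg ∩ Q` -/
def dsub (g : G) (H Q : Subgroup G) : Subgroup G :=
  Subgroup.map (MulAut.conj g⁻¹).toMonoidHom H ⊓ Q

lemma dsub_le (g : G) (H Q : Subgroup G) : dsub g H Q ≤ Q := inf_le_right

lemma mem_dsub {g x : G} {H Q : Subgroup G} :
    x ∈ dsub g H Q ↔ g * x * g⁻¹ ∈ H ∧ x ∈ Q := by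
  constructor
  · rintro ⟨⟨h, hh, rfl⟩, hq⟩
    refine ⟨?_, hq⟩
    have : g * ((MulAut.conj g⁻¹).toMonoidHom h) * g⁻¹ = h := by
      simp [MulAut.conj]
      group
    rwa [this]
  · rintro ⟨hh, hq⟩
    refine ⟨⟨g * x * g⁻¹, hh, ?_⟩, hq⟩
    simp [MulAut.conj]
    group

lemma hEquiv_dsub {M : FDRep k G} {H Q : Subgroup G} {φ ψ : Module.End k M}
    (hφ : HEquiv M H φ) (hψ : HEquiv M Q ψ) (g : G) :
    HEquiv M (dsub g H Q) (cj M g φ * ψ) := by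
  intro r hr
  obtain ⟨hh, hq⟩ := mem_dsub.mp hr
  rw [cj_mul, hψ r hq]
  congr 1
  rw [cj_cj]
  have : g * r = (g * r * g⁻¹) * g := by group
  rw [this, ← cj_cj, hφ _ hh]

lemma mkQ_eq_of_rel {Q : Subgroup G} {a b : G} (h : b * a⁻¹ ∈ Q) :
    (Quotient.mk'' a : RQ Q) = Quotient.mk'' b :=
  Quotient.sound' ((QuotientGroup.rightRel_apply).mpr h)

lemma out_rel (Q : Subgroup G) (a : G) :
    (Quotient.mk'' a : RQ Q).out * a⁻¹ ∈ Q := by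
  have : (Quotient.mk'' ((Quotient.mk'' a : RQ Q).out) : RQ Q) = Quotient.mk'' a := by
    rw [Quotient.out_eq']
  exact (QuotientGroup.rightRel_apply).mp (Quotient.exact' this.symm)

open Classical in
lemma mackey [Fintype G] {M : FDRep k G} (H Q : Subgroup G) (φ ψ : Module.End k M)
    (hφ : HEquiv M H φ) (hψ : HEquiv M Q ψ) :
    tr M H φ * tr M Q ψ
      = ∑ D : DQ H Q, tr M (dsub D.out H Q) (cj M D.out φ * ψ) := by
  have lhs : tr M H φ * tr M Q ψ
      = ∑ p : RQ H × RQ Q, cj M p.1.out φ * cj M p.2.out ψ := by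
    rw [tr, tr, Finset.sum_mul_sum, ← Finset.univ_product_univ, Finset.sum_product]
  rw [lhs, ← Finset.sum_fiberwise Finset.univ
    (fun p : RQ H × RQ Q => DoubleCoset.mk H Q (p.1.out * p.2.out⁻¹))
    (fun p => cj M p.1.out φ * cj M p.2.out ψ)]
  refine Finset.sum_congr rfl fun D _ => ?_
  rw [tr]
  set g := D.out with hg
  refine Eq.symm (Finset.sum_bij (fun (Cz : RQ (dsub g H Q)) _ =>
    ((Quotient.mk'' (g * Cz.out) : RQ H), (Quotient.mk'' Cz.out : RQ Q))) ?_ ?_ ?_ ?_)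
  · -- maps into the fiber
    intro Cz _
    simp only [Finset.mem_filter, Finset.mem_univ, true_and]
    set z := Cz.out
    have h1 : (Quotient.mk'' (g * z) : RQ H).out * (g * z)⁻¹ ∈ H := out_rel _ _
    have h2 : (Quotient.mk'' z : RQ Q).out * z⁻¹ ∈ Q := out_rel _ _
    have hD : D = DoubleCoset.mk H Q g := (DoubleCoset.out_eq' _ _ D).symm
    rw [hD, DoubleCoset.eq]
    refine ⟨((Quotient.mk'' (g * z) : RQ H).out * (g * z)⁻¹)⁻¹, H.inv_mem h1,
      (Quotient.mk'' z : RQ Q).out * z⁻¹, h2, ?_⟩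
    group
  · -- injective
    intro Cz _ Cz' _ hEq
    have e1 : (Quotient.mk'' (g * Cz.out) : RQ H) = Quotient.mk'' (g * Cz'.out) :=
      congrArg Prod.fst hEq
    have e2 : (Quotient.mk'' Cz.out : RQ Q) = Quotient.mk'' Cz'.out :=
      congrArg Prod.snd hEq
    have hq : Cz'.out * Cz.out⁻¹ ∈ Q :=
      (QuotientGroup.rightRel_apply).mp (Quotient.exact' e2)
    have hh : (g * Cz'.out) * (g * Cz.out)⁻¹ ∈ H :=
      (QuotientGroup.rightRel_apply).mp (Quotient.exact' e1)
    have hmem : Cz'.out * Cz.out⁻¹ ∈ dsub g H Q := by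
      rw [mem_dsub]
      constructor
      · have : g * (Cz'.out * Cz.out⁻¹) * g⁻¹ = (g * Cz'.out) * (g * Cz.out)⁻¹ := by group
        rwa [this]
      · exact hq
    calc Cz = Quotient.mk'' Cz.out := (Quotient.out_eq' Cz).symm
    _ = Quotient.mk'' Cz'.out := Quotient.sound' ((QuotientGroup.rightRel_apply).mpr hmem)
    _ = Cz' := Quotient.out_eq' Cz'
  · -- surjective
    intro b hb
    simp only [Finset.mem_filter, Finset.mem_univ, true_and] at hb
    have hD : D = DoubleCoset.mk H Q g := (DoubleCoset.out_eq' _ _ D).symm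
    rw [hD, DoubleCoset.eq] at hb
    obtain ⟨h, hh, q, hq, hgeq⟩ := hb
    set x := b.1.out
    set y := b.2.out
    set z := q⁻¹ * y with hz
    refine ⟨Quotient.mk'' z, Finset.mem_univ _, ?_⟩
    have hzout : (Quotient.mk'' z : RQ (dsub g H Q)).out * z⁻¹ ∈ dsub g H Q := out_rel _ _
    set z' := (Quotient.mk'' z : RQ (dsub g H Q)).out
    have hz'q : z' * z⁻¹ ∈ Q := dsub_le g H Q hzout
    have hz'h : g * (z' * z⁻¹) * g⁻¹ ∈ H := (mem_dsub.mp hzout).1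
    have hgz : g * z = h * x := by
      rw [hz, hgeq]; group
    have fst : (Quotient.mk'' (g * z') : RQ H) = b.1 := by
      have r1 : (g * z) * (g * z')⁻¹ ∈ H := by
        have : (g * z) * (g * z')⁻¹ = (g * (z' * z⁻¹) * g⁻¹)⁻¹ := by group
        rw [this]; exact H.inv_mem hz'h
      have step1 : (Quotient.mk'' (g * z') : RQ H) = Quotient.mk'' (g * z) :=
        mkQ_eq_of_rel r1
      have r2 : x * (g * z)⁻¹ ∈ H := by
        rw [hgz]
        have : x * (h * x)⁻¹ = (x * x⁻¹) * h⁻¹ := by group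
        rw [this]; simpa using H.inv_mem hh
      have step2 : (Quotient.mk'' (g * z) : RQ H) = Quotient.mk'' x := mkQ_eq_of_rel r2
      rw [step1, step2]
      exact Quotient.out_eq' b.1
    have snd : (Quotient.mk'' z' : RQ Q) = b.2 := by
      have step1 : (Quotient.mk'' z' : RQ Q) = Quotient.mk'' z := by
        refine (mkQ_eq_of_rel ?_).symm
        exact hz'q
      have r2 : y * z⁻¹ ∈ Q := by
        have : y * z⁻¹ = q := by rw [hz]; group
        rw [this]; exact hq
      have step2 : (Quotient.mk'' z : RQ Q) = Quotient.mk'' y := mkQ_eq_of_rel r2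
      rw [step1, step2]
      exact Quotient.out_eq' b.2
    exact Prod.ext fst snd
  · -- terms agree
    intro Cz _
    have h1 : cj M (Quotient.mk'' (g * Cz.out) : RQ H).out φ = cj M (g * Cz.out) φ :=
      (conjEq hφ (out_rel _ _)).symm
    have h2 : cj M (Quotient.mk'' Cz.out : RQ Q).out ψ = cj M Cz.out ψ :=
      (conjEq hψ (out_rel _ _)).symm
    show cj M Cz.out (cj M g φ * ψ) = _
    rw [h1, h2, cj_mul, cj_cj]


section Fitting

/-- subrepresentation on a stable submodule -/
def subρ (M : FDRep k G) (U : Submodule k M) (hU : ∀ g : G, ∀ x ∈ U, M.ρ g x ∈ U) :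
    Representation k G U where
  toFun g := (M.ρ g).restrict (hU g)
  map_one' := by
    ext x
    simp [LinearMap.restrict_apply]
  map_mul' g₁ g₂ := by
    ext x
    simp [LinearMap.restrict_apply]

/-- subrepresentation as an `FDRep` -/
def subRep (M : FDRep k G) (U : Submodule k M) (hU : ∀ g : G, ∀ x ∈ U, M.ρ g x ∈ U) :
    FDRep k G :=
  FDRep.of (subρ M U hU)

/-- inclusion of a subrepresentation -/
def subIncl (M : FDRep k G) (U : Submodule k M) (hU : ∀ g : G, ∀ x ∈ U, M.ρ g x ∈ U) :
    subRep M U hU ⟶ M := by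
  refine Action.Hom.mk (ObjectProperty.homMk (ModuleCat.ofHom (U.subtype : ↥U →ₗ[k] M.V))) ?_
  intro g
  apply FGModuleCat.hom_ext
  show (U.subtype : ↥U →ₗ[k] M) ∘ₗ (subρ M U hU) g = M.ρ g ∘ₗ U.subtype
  ext x
  simp [subρ, LinearMap.restrict_apply]

/-- projection onto a subrepresentation along a stable complement -/
def subProj (M : FDRep k G) (U W : Submodule k M) (hU : ∀ g : G, ∀ x ∈ U, M.ρ g x ∈ U)
    (hW : ∀ g : G, ∀ x ∈ W, M.ρ g x ∈ W) (hC : IsCompl U W) :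
    M ⟶ subRep M U hU := by
  refine Action.Hom.mk (ObjectProperty.homMk (ModuleCat.ofHom (U.projectionOnto W hC : M.V →ₗ[k] ↥U))) ?_
  intro g
  apply FGModuleCat.hom_ext
  show (U.projectionOnto W hC : M →ₗ[k] U) ∘ₗ M.ρ g
      = (subρ M U hU) g ∘ₗ U.projectionOnto W hC
  ext x
  obtain ⟨u, hu, w, hw, rfl⟩ : ∃ u ∈ U, ∃ w ∈ W, u + w = x := by
    have : x ∈ U ⊔ W := by rw [hC.sup_eq_top]; trivial
    obtain ⟨u, hu, w, hw, h⟩ := Submodule.mem_sup.mp this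
    exact ⟨u, hu, w, hw, h⟩
  have e1 : U.projectionOnto W hC (u + w) = ⟨u, hu⟩ := by
    rw [map_add, Submodule.linearProjOfIsCompl_apply_left hC ⟨u, hu⟩,
      Submodule.projectionOnto_apply_of_mem_right hC hw, add_zero]
  have e2 : U.projectionOnto W hC (M.ρ g (u + w)) = ⟨M.ρ g u, hU g u hu⟩ := by
    rw [map_add, map_add, Submodule.linearProjOfIsCompl_apply_left hC ⟨M.ρ g u, hU g u hu⟩,
      Submodule.projectionOnto_apply_of_mem_right hC (hW g w hw), add_zero]
  simp only [LinearMap.comp_apply, e1, e2]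
  rfl

lemma isZero_of_all_zero (M : FDRep k G) (h : ∀ x : M, x = 0) : Limits.IsZero M := by
  rw [Limits.IsZero.iff_id_eq_zero]
  apply Action.Hom.ext
  apply FGModuleCat.hom_ext
  apply LinearMap.ext
  intro x
  exact h x

lemma eq_zero_of_isZero (M : FDRep k G) (h : Limits.IsZero M) : ∀ x : M, x = 0 := by
  rw [Limits.IsZero.iff_id_eq_zero] at h
  intro x
  calc x = (𝟙 M : M ⟶ M).hom x := rfl
  _ = (0 : M ⟶ M).hom x := by rw [h]
  _ = 0 := rfl

lemma bij_pow {M : FDRep k G} {φ : Module.End k M} (h : Function.Bijective φ) (n : ℕ) :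
    Function.Bijective (φ ^ n) :=
  (Module.End.isUnit_iff _).mp (((Module.End.isUnit_iff φ).mpr h).pow n)

lemma not_bij_of_nilp {M : FDRep k G} (hM : ¬ Limits.IsZero M) {φ : Module.End k M}
    (hn : IsNilpotent φ) : ¬ Function.Bijective φ := by
  intro hb
  obtain ⟨n, hn⟩ := hn
  apply hM
  apply isZero_of_all_zero
  intro x
  have hbn := bij_pow hb n
  rw [hn] at hbn
  have h0 : (0 : Module.End k M) x = (0 : Module.End k M) 0 := by simp
  simpa using hbn.injective h0

/-- Fitting dichotomy -/
lemma nilp_or_bij {M : FDRep k G} (hM : Indec M) {φ : Module.End k M} (hφ : GEquiv M φ) :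
    IsNilpotent φ ∨ Function.Bijective φ := by
  have hcomm : ∀ (g : G) (n : ℕ), (φ ^ n) * M.ρ g = M.ρ g * (φ ^ n) := by
    intro g n
    exact Commute.pow_left (gEquiv_comm hφ g) n
  obtain ⟨n, hn1, hcompl⟩ : ∃ n : ℕ, 1 ≤ n ∧
      IsCompl (LinearMap.ker (φ ^ n)) (LinearMap.range (φ ^ n)) := by
    have h := (LinearMap.eventually_isCompl_ker_pow_range_pow φ).and
      (Filter.eventually_ge_atTop 1)
    obtain ⟨n, h1, h2⟩ := h.exists
    exact ⟨n, h2, h1⟩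
  have hUstab : ∀ g : G, ∀ x ∈ LinearMap.ker (φ ^ n), M.ρ g x ∈ LinearMap.ker (φ ^ n) := by
    intro g x hx
    rw [LinearMap.mem_ker] at hx ⊢
    have hxg : (φ ^ n) (M.ρ g x) = M.ρ g ((φ ^ n) x) := by
      calc (φ ^ n) (M.ρ g x) = ((φ ^ n) * M.ρ g) x := rfl
      _ = (M.ρ g * (φ ^ n)) x := by rw [hcomm g n]
      _ = M.ρ g ((φ ^ n) x) := rfl
    rw [hxg, hx, map_zero]
  have hWstab : ∀ g : G, ∀ x ∈ LinearMap.range (φ ^ n), M.ρ g x ∈ LinearMap.range (φ ^ n) := by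
    rintro g x ⟨y, rfl⟩
    refine ⟨M.ρ g y, ?_⟩
    calc (φ ^ n) (M.ρ g y) = ((φ ^ n) * M.ρ g) y := rfl
    _ = (M.ρ g * (φ ^ n)) y := by rw [hcomm g n]
    _ = M.ρ g ((φ ^ n) y) := rfl
  set U := LinearMap.ker (φ ^ n) with hU
  set W := LinearMap.range (φ ^ n) with hW
  have hiso : Nonempty (M ≅ subRep M U hUstab ⊞ subRep M W hWstab) := by
    refine ⟨⟨biprod.lift (subProj M U W hUstab hWstab hcompl)
      (subProj M W U hWstab hUstab hcompl.symm),
      biprod.desc (subIncl M U hUstab) (subIncl M W hWstab), ?_, ?_⟩⟩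
    · rw [biprod.lift_desc]
      apply Action.Hom.ext
      apply FGModuleCat.hom_ext
      apply LinearMap.ext
      intro x
      obtain ⟨u, hu, w, hw, rfl⟩ : ∃ u ∈ U, ∃ w ∈ W, u + w = x := by
        have hmem : x ∈ U ⊔ W := by rw [hcompl.sup_eq_top]; trivial
        obtain ⟨u, hu, w, hw, h⟩ := Submodule.mem_sup.mp hmem
        exact ⟨u, hu, w, hw, h⟩
      show (U.subtype (U.projectionOnto W hcompl (u + w)))
          + (W.subtype (W.projectionOnto U hcompl.symm (u + w))) = u + w
      rw [map_add, map_add, Submodule.linearProjOfIsCompl_apply_left hcompl ⟨u, hu⟩,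
        Submodule.projectionOnto_apply_of_mem_right hcompl hw,
        map_add, Submodule.linearProjOfIsCompl_apply_left hcompl.symm ⟨w, hw⟩,
        Submodule.projectionOnto_apply_of_mem_right hcompl.symm hu]
      simp
    · apply biprod.hom_ext'
      · rw [biprod.inl_desc_assoc, Category.comp_id]
        apply biprod.hom_ext
        · rw [Category.assoc, biprod.lift_fst, biprod.inl_fst]
          apply Action.Hom.ext; apply FGModuleCat.hom_ext; apply LinearMap.ext; intro x
          show (U.projectionOnto W hcompl) (U.subtype x) = x
          exact Submodule.linearProjOfIsCompl_apply_left hcompl x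
        · rw [Category.assoc, biprod.lift_snd, biprod.inl_snd]
          apply Action.Hom.ext; apply FGModuleCat.hom_ext; apply LinearMap.ext; intro x
          show (W.projectionOnto U hcompl.symm) (U.subtype x) = 0
          exact Submodule.projectionOnto_apply_of_mem_right hcompl.symm x.2
      · rw [biprod.inr_desc_assoc, Category.comp_id]
        apply biprod.hom_ext
        · rw [Category.assoc, biprod.lift_fst, biprod.inr_fst]
          apply Action.Hom.ext; apply FGModuleCat.hom_ext; apply LinearMap.ext; intro x
          show (U.projectionOnto W hcompl) (W.subtype x) = 0
          exact Submodule.projectionOnto_apply_of_mem_right hcompl x.2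
        · rw [Category.assoc, biprod.lift_snd, biprod.inr_snd]
          apply Action.Hom.ext; apply FGModuleCat.hom_ext; apply LinearMap.ext; intro x
          show (W.projectionOnto U hcompl.symm) (W.subtype x) = x
          exact Submodule.linearProjOfIsCompl_apply_left hcompl.symm x
  rcases hM.2 _ _ hiso with hz | hz
  · right
    have hker : ∀ x : M, (φ ^ n) x = 0 → x = 0 := by
      intro x hx
      have hx0 : (⟨x, hx⟩ : U) = 0 := eq_zero_of_isZero _ hz ⟨x, hx⟩
      exact congrArg Subtype.val hx0
    have hinj : Function.Injective φ := by
      rw [← LinearMap.ker_eq_bot, Submodule.eq_bot_iff]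
      intro x hx
      rw [LinearMap.mem_ker] at hx
      apply hker
      obtain ⟨m, rfl⟩ : ∃ m, n = m + 1 := ⟨n - 1, by omega⟩
      rw [pow_succ]
      show (φ ^ m) (φ x) = 0
      rw [hx, map_zero]
    exact ⟨hinj, (LinearMap.injective_iff_surjective).mp hinj⟩
  · left
    refine ⟨n, ?_⟩
    apply LinearMap.ext
    intro x
    have hx : (⟨(φ ^ n) x, ⟨x, rfl⟩⟩ : W) = 0 := eq_zero_of_isZero _ hz _
    simpa using congrArg Subtype.val hx

lemma gEquiv_zero (M : FDRep k G) : GEquiv M 0 := by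
  intro g; simp [cj]

lemma nilp_add {M : FDRep k G} (hM : Indec M) {a b : Module.End k M}
    (ha : GEquiv M a) (hb : GEquiv M b) (na : IsNilpotent a) (nb : IsNilpotent b) :
    IsNilpotent (a + b) := by
  rcases nilp_or_bij hM (gEquiv_add ha hb) with h | h
  · exact h
  exfalso
  set u := a + b with hu
  have huG : GEquiv M u := gEquiv_add ha hb
  set e := LinearEquiv.ofBijective u h with he
  set w : Module.End k M := e.symm.toLinearMap with hwdef
  have hwu : w * u = 1 := by
    apply LinearMap.ext; intro x
    show e.symm (e x) = x
    exact e.symm_apply_apply x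
  have huw : u * w = 1 := by
    apply LinearMap.ext; intro x
    show e (e.symm x) = x
    exact e.apply_symm_apply x
  have hwG : GEquiv M w := by
    intro g
    have h1 : cj M g w * u = 1 := by
      show (M.ρ g⁻¹ * w * M.ρ g) * u = 1
      have hgu : M.ρ g * u = u * M.ρ g := (gEquiv_comm huG g).symm
      calc (M.ρ g⁻¹ * w * M.ρ g) * u = M.ρ g⁻¹ * w * (M.ρ g * u) := by
            rw [mul_assoc]
      _ = M.ρ g⁻¹ * w * (u * M.ρ g) := by rw [hgu]
      _ = M.ρ g⁻¹ * (w * u) * M.ρ g := by rw [mul_assoc, mul_assoc, mul_assoc]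
      _ = 1 := by rw [hwu, mul_one, ← map_mul]; simp
    calc cj M g w = cj M g w * (u * w) := by rw [huw, mul_one]
    _ = (cj M g w * u) * w := by rw [mul_assoc]
    _ = w := by rw [h1, one_mul]
  have bij_of_w_mul : ∀ c : Module.End k M, Function.Bijective (w * c) →
      Function.Bijective c := by
    intro c hc
    have hc' : c = u * (w * c) := by rw [← mul_assoc, huw, one_mul]
    rw [hc']
    exact (Module.End.isUnit_iff _).mp
      (((Module.End.isUnit_iff u).mpr h).mul ((Module.End.isUnit_iff _).mpr hc))
  rcases nilp_or_bij hM (gEquiv_mul hwG ha) with hna | hba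
  · have hwb : w * b = 1 - w * a := by
      have hsum : w * a + w * b = 1 := by rw [← mul_add, ← hu, hwu]
      rw [← hsum]; abel
    have hbij : Function.Bijective (w * b) := by
      rw [hwb]
      exact (Module.End.isUnit_iff _).mp (IsNilpotent.isUnit_one_sub hna)
    rcases nilp_or_bij hM (gEquiv_mul hwG hb) with hnb2 | hbb
    · exact not_bij_of_nilp hM.1 hnb2 hbij
    · exact not_bij_of_nilp hM.1 nb (bij_of_w_mul b hbb)
  · exact not_bij_of_nilp hM.1 na (bij_of_w_mul a hba)

lemma nilp_sum {M : FDRep k G} (hM : Indec M) {ι : Type} (s : Finset ι)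
    (c : ι → Module.End k M) (hg : ∀ i ∈ s, GEquiv M (c i))
    (hn : ∀ i ∈ s, IsNilpotent (c i)) :
    IsNilpotent (∑ i ∈ s, c i) := by
  classical
  induction s using Finset.cons_induction with
  | empty => simpa using IsNilpotent.zero
  | cons i s hi ih =>
      rw [Finset.sum_cons]
      have hgs : GEquiv M (∑ j ∈ s, c j) := by
        intro g
        rw [cj_sum]
        exact Finset.sum_congr rfl fun j hj => hg j (Finset.mem_cons.mpr (Or.inr hj)) g
      exact nilp_add hM (hg i (Finset.mem_cons_self i s))
        hgs (hn i (Finset.mem_cons_self i s))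
        (ih (fun j hj => hg j (Finset.mem_cons.mpr (Or.inr hj)))
            (fun j hj => hn j (Finset.mem_cons.mpr (Or.inr hj))))

lemma one_not_nilp {M : FDRep k G} (hM : ¬ Limits.IsZero M) :
    ¬ IsNilpotent (1 : Module.End k M) := by
  rintro ⟨n, hn⟩
  apply hM
  apply isZero_of_all_zero
  intro x
  have h1 : ((1 : Module.End k M) ^ n) x = (0 : Module.End k M) x := by rw [hn]
  simpa using h1

end Fitting


section Induced

/-- the underlying linear map of a morphism of representations -/
def hmap {A B : FDRep k G} (f : A ⟶ B) : A →ₗ[k] B := f.hom.hom.hom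

lemma hmap_comm {A B : FDRep k G} (f : A ⟶ B) (g : G) :
    hmap f ∘ₗ A.ρ g = B.ρ g ∘ₗ hmap f := by
  have := congrArg (fun x : A.V ⟶ B.V => x.hom.hom) (f.comm g); exact this

lemma hmap_comm_apply {A B : FDRep k G} (f : A ⟶ B) (g : G) (x : A) :
    hmap f (A.ρ g x) = B.ρ g (hmap f x) := LinearMap.congr_fun (hmap_comm f g) x

lemma hmap_comp {A B C : FDRep k G} (f : A ⟶ B) (g : B ⟶ C) :
    hmap (f ≫ g) = (hmap g) ∘ₗ (hmap f) := rfl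

lemma hmap_id (A : FDRep k G) : hmap (𝟙 A) = LinearMap.id := rfl

/-- build a morphism of representations from an equivariant linear map -/
def mkHom {A B : FDRep k G} (f : A →ₗ[k] B) (hf : ∀ g : G, f ∘ₗ A.ρ g = B.ρ g ∘ₗ f) :
    A ⟶ B := Action.Hom.mk (ObjectProperty.homMk (ModuleCat.ofHom f))
  (fun g => by apply FGModuleCat.hom_ext; exact hf g)

lemma hmap_mkHom {A B : FDRep k G} (f : A →ₗ[k] B) (hf) : hmap (mkHom f hf) = f := rfl

lemma hom_ext {A B : FDRep k G} {f g : A ⟶ B} (h : hmap f = hmap g) : f = g :=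
  Action.Hom.ext (FGModuleCat.hom_ext h)

lemma hEquiv_comm {M : FDRep k G} {H : Subgroup G} {φ : Module.End k M}
    (hφ : HEquiv M H φ) {h : G} (hh : h ∈ H) : φ * M.ρ h = M.ρ h * φ := by
  have hc := hφ h hh
  simp only [cj] at hc
  calc φ * M.ρ h = (M.ρ h * M.ρ h⁻¹) * φ * M.ρ h := by simp [← map_mul]
  _ = M.ρ h * (M.ρ h⁻¹ * φ * M.ρ h) := by simp [mul_assoc]
  _ = M.ρ h * φ := by rw [hc]

variable [Fintype G]

open Classical in
/-- the canonical embedding of `M` into the module induced from `res H M` -/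
def eEltMap (H : Subgroup G) (M : FDRep k G) : (M : Type) →ₗ[k] (ind H (res H M) : Type) where
  toFun m := ⟨fun x => if hx : x ∈ H then M.ρ x m else 0, by
    intro h g
    show (if hx : (↑h * g : G) ∈ H then M.ρ (↑h * g) m else 0)
        = M.ρ ↑h (if hx : g ∈ H then M.ρ g m else 0)
    by_cases hg : g ∈ H
    · have hmem : (↑h * g : G) ∈ H := H.mul_mem h.2 hg
      rw [dif_pos hg, dif_pos hmem]
      show M.ρ (↑h * g) m = M.ρ (↑h) (M.ρ g m)
      rw [map_mul]
      rfl
    · have hmem : (↑h * g : G) ∉ H := by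
        intro hc
        apply hg
        have h2 := H.mul_mem (H.inv_mem h.2) hc
        simpa [← mul_assoc] using h2
      rw [dif_neg hg, dif_neg hmem, map_zero]⟩
  map_add' a b := by
    apply Subtype.ext
    funext x
    show (if hx : x ∈ H then M.ρ x (a + b) else 0)
        = (if hx : x ∈ H then M.ρ x a else 0) + (if hx : x ∈ H then M.ρ x b else 0)
    by_cases hx : x ∈ H <;> simp [hx]
  map_smul' c a := by
    apply Subtype.ext
    funext x
    show (if hx : x ∈ H then M.ρ x (c • a) else 0)
        = c • (if hx : x ∈ H then M.ρ x a else 0)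
    by_cases hx : x ∈ H <;> simp [hx]

open Classical in
lemma eEltMap_apply (H : Subgroup G) (M : FDRep k G) (m : M) (x : G) :
    (eEltMap H M m).1 x = if x ∈ H then M.ρ x m else 0 := by
  show (if hx : x ∈ H then M.ρ x m else 0) = _
  by_cases hx : x ∈ H <;> simp [hx]

lemma ind_ρ_apply (H : Subgroup G) (S : FDRep k ↥H) (g : G) (f : (ind H S : Type)) (x : G) :
    ((ind H S).ρ g f).1 x = f.1 (x * g) := rfl

lemma ind_mem (H : Subgroup G) (S : FDRep k ↥H) (f : (ind H S : Type)) (h : ↥H) (x : G) :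
    f.1 (↑h * x) = S.ρ h (f.1 x) := f.2 h x

/-- evaluation at a point, translated back to `M` -/
def cosetEval (H : Subgroup G) (M : FDRep k G) (x : G) :
    (ind H (res H M) : Type) →ₗ[k] (M : Type) where
  toFun f := M.ρ x⁻¹ (f.1 x)
  map_add' a b := by
    have h : (a + b).1 x = a.1 x + b.1 x := rfl
    simp only [h]
    exact map_add (M.ρ x⁻¹) _ _
  map_smul' c a := by
    have h : (c • a).1 x = c • a.1 x := rfl
    simp only [h]
    exact map_smul (M.ρ x⁻¹) c _

lemma cosetEval_indep (H : Subgroup G) (M : FDRep k G) {x y : G} (hxy : y * x⁻¹ ∈ H) :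
    cosetEval H M x = cosetEval H M y := by
  apply LinearMap.ext
  intro f
  show M.ρ x⁻¹ (f.1 x) = M.ρ y⁻¹ (f.1 y)
  have hy : y = (⟨y * x⁻¹, hxy⟩ : ↥H) * x := by simp
  have hf : f.1 y = M.ρ (y * x⁻¹) (f.1 x) := by
    conv_lhs => rw [hy]
    exact f.2 ⟨y * x⁻¹, hxy⟩ x
  rw [hf]
  have h2 : M.ρ y⁻¹ (M.ρ (y * x⁻¹) (f.1 x)) = (M.ρ y⁻¹ * M.ρ (y * x⁻¹)) (f.1 x) := rfl
  rw [h2, ← map_mul]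
  congr 2
  group

/-- the underlying map of the counit -/
def counitMap (H : Subgroup G) (M : FDRep k G) : (ind H (res H M) : Type) →ₗ[k] (M : Type) :=
  ∑ C : RQ H, cosetEval H M C.out

/-- the counit as a morphism of representations -/
def counit (H : Subgroup G) (M : FDRep k G) : ind H (res H M) ⟶ M := by
  refine mkHom (counitMap H M) ?_
  intro g
  apply LinearMap.ext
  intro f
  show counitMap H M ((ind H (res H M)).ρ g f) = M.ρ g (counitMap H M f)
  have key : ∀ C : RQ H, cosetEval H M C.out ((ind H (res H M)).ρ g f)
      = M.ρ g (cosetEval H M ((rqMul g C).out) f) := by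
    intro C
    have e1 : cosetEval H M ((rqMul g C).out) f = cosetEval H M (C.out * g) f := by
      rw [cosetEval_indep H M (rqMul_out_rel g C)]
    rw [e1]
    show M.ρ (C.out)⁻¹ (f.1 (C.out * g)) = M.ρ g (M.ρ (C.out * g)⁻¹ (f.1 (C.out * g)))
    have h2 : M.ρ g (M.ρ (C.out * g)⁻¹ (f.1 (C.out * g)))
        = (M.ρ g * M.ρ (C.out * g)⁻¹) (f.1 (C.out * g)) := rfl
    rw [h2, ← map_mul]
    congr 2
    group
  calc counitMap H M ((ind H (res H M)).ρ g f)
      = ∑ C : RQ H, cosetEval H M C.out ((ind H (res H M)).ρ g f) := by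
        rw [counitMap, LinearMap.sum_apply]
  _ = ∑ C : RQ H, M.ρ g (cosetEval H M ((rqMul g C).out) f) :=
        Finset.sum_congr rfl fun C _ => key C
  _ = M.ρ g (∑ C : RQ H, cosetEval H M ((rqMul g C).out) f) := (map_sum _ _ _).symm
  _ = M.ρ g (∑ C : RQ H, cosetEval H M C.out f) := by
        congr 1
        exact Fintype.sum_equiv (rqMul g) _ _ (fun C => rfl)
  _ = M.ρ g (counitMap H M f) := by rw [counitMap, LinearMap.sum_apply]

/-- a split surjection exhibits a summand -/
lemma isSummand_of_retract {X Y : FDRep k G} (i : X ⟶ Y) (r : Y ⟶ X) (hir : i ≫ r = 𝟙 X) :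
    IsSummand X Y := by
  have hpt : ∀ x : X, hmap r (hmap i x) = x := by
    intro x
    have h1 : hmap (i ≫ r) x = x := by rw [hir, hmap_id]; rfl
    exact h1
  have hstab : ∀ g : G, ∀ y ∈ LinearMap.ker (hmap r), Y.ρ g y ∈ LinearMap.ker (hmap r) := by
    intro g y hy
    rw [LinearMap.mem_ker] at hy ⊢
    rw [hmap_comm_apply r g y, hy, map_zero]
  set U : Submodule k Y := LinearMap.ker (hmap r) with hUdef
  have hkmem : ∀ y : Y, y - hmap i (hmap r y) ∈ U := by
    intro y
    rw [hUdef, LinearMap.mem_ker, map_sub, hpt, sub_self]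
  have kcomm : ∀ g : G,
      (LinearMap.codRestrict U (LinearMap.id - hmap i ∘ₗ hmap r) hkmem) ∘ₗ Y.ρ g
        = (subRep Y U hstab).ρ g ∘ₗ
          (LinearMap.codRestrict U (LinearMap.id - hmap i ∘ₗ hmap r) hkmem) := by
    intro g
    apply LinearMap.ext
    intro y
    apply Subtype.ext
    show Y.ρ g y - hmap i (hmap r (Y.ρ g y)) = Y.ρ g (y - hmap i (hmap r y))
    rw [hmap_comm_apply r g y, hmap_comm_apply i g (hmap r y), map_sub]
  set kmap : Y ⟶ subRep Y U hstab :=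
    mkHom (LinearMap.codRestrict U (LinearMap.id - hmap i ∘ₗ hmap r) hkmem) kcomm with hkmap
  refine ⟨subRep Y U hstab, ⟨⟨biprod.lift r kmap, biprod.desc i (subIncl Y U hstab), ?_, ?_⟩⟩⟩
  · rw [biprod.lift_desc]
    apply hom_ext
    apply LinearMap.ext
    intro y
    show hmap i (hmap r y) + (y - hmap i (hmap r y)) = y
    abel
  · apply biprod.hom_ext'
    · rw [biprod.inl_desc_assoc, Category.comp_id]
      apply biprod.hom_ext
      · rw [Category.assoc, biprod.lift_fst, biprod.inl_fst, hir]
      · rw [Category.assoc, biprod.lift_snd, biprod.inl_snd]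
        apply hom_ext
        apply LinearMap.ext
        intro x
        apply Subtype.ext
        show hmap i x - hmap i (hmap r (hmap i x)) = 0
        rw [hpt, sub_self]
    · rw [biprod.inr_desc_assoc, Category.comp_id]
      apply biprod.hom_ext
      · rw [Category.assoc, biprod.lift_fst, biprod.inr_fst]
        apply hom_ext
        apply LinearMap.ext
        intro z
        show hmap r z.1 = 0
        exact z.2
      · rw [Category.assoc, biprod.lift_snd, biprod.inr_snd]
        apply hom_ext
        apply LinearMap.ext
        intro z
        apply Subtype.ext
        show z.1 - hmap i (hmap r z.1) = z.1
        have hz : hmap r z.1 = 0 := z.2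
        rw [hz, map_zero, sub_zero]

open Classical in
/-- Higman's criterion, easy direction: a trace identity gives relative projectivity. -/
lemma relProj_of_tr {M : FDRep k G} (R : Subgroup G) (χ : Module.End k M)
    (hχ : HEquiv M R χ) (h1 : tr M R χ = 1) : RelProj M R := by
  -- the equivariant embedding j : M ⟶ ind R (res R M)
  have jmem : ∀ m : M, (fun x : G => χ (M.ρ x m)) ∈ indV R (res R M) := by
    intro m h g
    show χ (M.ρ (↑h * g) m) = (res R M).ρ h (χ (M.ρ g m))
    have h2 : M.ρ (↑h * g) m = M.ρ ↑h (M.ρ g m) := by rw [map_mul]; rfl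
    rw [h2]
    have h3 : χ (M.ρ ↑h (M.ρ g m)) = (χ * M.ρ ↑h) (M.ρ g m) := rfl
    rw [h3, hEquiv_comm hχ h.2]
    rfl
  set jlin : (M : Type) →ₗ[k] (ind R (res R M) : Type) :=
    { toFun := fun m => ⟨fun x => χ (M.ρ x m), jmem m⟩
      map_add' := fun a b => by
        apply Subtype.ext
        funext x
        show χ (M.ρ x (a + b)) = χ (M.ρ x a) + χ (M.ρ x b)
        rw [map_add, map_add]
      map_smul' := fun c a => by
        apply Subtype.ext
        funext x
        show χ (M.ρ x (c • a)) = c • χ (M.ρ x a)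
        rw [map_smul, map_smul] } with hjlin
  have jcomm : ∀ g : G, jlin ∘ₗ M.ρ g = (ind R (res R M)).ρ g ∘ₗ jlin := by
    intro g
    apply LinearMap.ext
    intro m
    apply Subtype.ext
    funext x
    show χ (M.ρ x (M.ρ g m)) = χ (M.ρ (x * g) m)
    rw [map_mul]
    rfl
  have hretract : mkHom jlin jcomm ≫ counit R M = 𝟙 M := by
    apply hom_ext
    apply LinearMap.ext
    intro m
    rw [hmap_comp]
    show counitMap R M (jlin m) = m
    have heval : ∀ C : RQ R, cosetEval R M C.out (jlin m) = cj M C.out χ m := by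
      intro C
      show M.ρ (C.out)⁻¹ (χ (M.ρ C.out m)) = cj M C.out χ m
      rfl
    calc counitMap R M (jlin m) = ∑ C : RQ R, cosetEval R M C.out (jlin m) := by
          rw [counitMap, LinearMap.sum_apply]
    _ = ∑ C : RQ R, cj M C.out χ m := Finset.sum_congr rfl fun C _ => heval C
    _ = tr M R χ m := by rw [tr, LinearMap.sum_apply]
    _ = m := by rw [h1]; rfl
  exact ⟨res R M, isSummand_of_retract (mkHom jlin jcomm) (counit R M) hretract⟩

open Classical in
set_option maxHeartbeats 2000000 in
/-- Higman's criterion, converse direction: relative projectivity gives a trace identity. -/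
lemma tr_of_relProj {M : FDRep k G} (Q : Subgroup G) (h : RelProj M Q) :
    ∃ ψ : Module.End k M, HEquiv M Q ψ ∧ tr M Q ψ = 1 := by
  obtain ⟨S, Z, ⟨e⟩⟩ := h
  set i : M ⟶ ind Q S := biprod.inl ≫ e.inv with hi
  set p : ind Q S ⟶ M := e.hom ≫ biprod.fst with hp
  have hip : i ≫ p = 𝟙 M := by
    rw [hi, hp]
    rw [Category.assoc, Iso.inv_hom_id_assoc, biprod.inl_fst]
  -- the endomorphism θ of ind Q S
  have θmem : ∀ f : (ind Q S : Type),
      (fun x : G => if hx : x ∈ Q then S.ρ ⟨x, hx⟩ (f.1 1) else 0) ∈ indV Q S := by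
    intro f q g
    show (if hx : (↑q * g : G) ∈ Q then S.ρ ⟨↑q * g, hx⟩ (f.1 1) else 0)
        = S.ρ q (if hx : g ∈ Q then S.ρ ⟨g, hx⟩ (f.1 1) else 0)
    by_cases hg : g ∈ Q
    · have hmem : (↑q * g : G) ∈ Q := Q.mul_mem q.2 hg
      rw [dif_pos hg, dif_pos hmem]
      have hprod : (⟨↑q * g, hmem⟩ : ↥Q) = q * ⟨g, hg⟩ := rfl
      rw [hprod, map_mul]
      rfl
    · have hmem : (↑q * g : G) ∉ Q := by
        intro hc
        apply hg
        have h2 := Q.mul_mem (Q.inv_mem q.2) hc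
        simpa [← mul_assoc] using h2
      rw [dif_neg hg, dif_neg hmem, map_zero]
  set θ : Module.End k (ind Q S : Type) :=
    { toFun := fun f => ⟨fun x => if hx : x ∈ Q then S.ρ ⟨x, hx⟩ (f.1 1) else 0, θmem f⟩
      map_add' := fun a b => by
        apply Subtype.ext
        funext x
        have h2 : (a + b).1 1 = a.1 1 + b.1 1 := rfl
        show (if hx : x ∈ Q then S.ρ ⟨x, hx⟩ ((a + b).1 1) else 0)
            = (if hx : x ∈ Q then S.ρ ⟨x, hx⟩ (a.1 1) else 0)
              + (if hx : x ∈ Q then S.ρ ⟨x, hx⟩ (b.1 1) else 0)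
        rw [h2]
        by_cases hx : x ∈ Q <;> simp [hx]
      map_smul' := fun c a => by
        apply Subtype.ext
        funext x
        have h2 : (c • a).1 1 = c • a.1 1 := rfl
        show (if hx : x ∈ Q then S.ρ ⟨x, hx⟩ ((c • a).1 1) else 0)
            = c • (if hx : x ∈ Q then S.ρ ⟨x, hx⟩ (a.1 1) else 0)
        rw [h2]
        by_cases hx : x ∈ Q <;> simp [hx] } with hθ
  have θapply : ∀ (f : (ind Q S : Type)) (x : G),
      (θ f).1 x = if hx : x ∈ Q then S.ρ ⟨x, hx⟩ (f.1 1) else 0 := fun f x => rfl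
  have θequiv : HEquiv (ind Q S) Q θ := by
    intro q hq
    have hcomm : θ * (ind Q S).ρ q = (ind Q S).ρ q * θ := by
      apply LinearMap.ext
      intro f
      apply Subtype.ext
      funext x
      show (θ ((ind Q S).ρ q f)).1 x = ((ind Q S).ρ q (θ f)).1 x
      have hrhs : ((ind Q S).ρ q (θ f)).1 x = (θ f).1 (x * q) := rfl
      rw [θapply, hrhs, θapply]
      by_cases hx : x ∈ Q
      · have hmem : x * q ∈ Q := Q.mul_mem hx hq
        rw [dif_pos hx, dif_pos hmem]
        have h1 : ((ind Q S).ρ q f).1 1 = f.1 (1 * q) := rfl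
        rw [h1, one_mul]
        have h2 : f.1 q = f.1 (↑(⟨q, hq⟩ : ↥Q) * 1) := by rw [mul_one]
        rw [h2, ind_mem]
        have h3 : S.ρ ⟨x, hx⟩ (S.ρ ⟨q, hq⟩ (f.1 1))
            = S.ρ (⟨x, hx⟩ * ⟨q, hq⟩) (f.1 1) := by rw [map_mul]; rfl
        rw [h3]
        rfl
      · have hmem : x * q ∉ Q := by
          intro hc
          apply hx
          have h2 := Q.mul_mem hc (Q.inv_mem hq)
          simpa [mul_assoc] using h2
        rw [dif_neg hx, dif_neg hmem]
    -- now convert commuting to cj fixed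
    show (ind Q S).ρ q⁻¹ * θ * (ind Q S).ρ q = θ
    rw [mul_assoc, hcomm, ← mul_assoc, ← map_mul]
    simp
  classical
  have θtr : tr (ind Q S) Q θ = 1 := by
    apply LinearMap.ext
    intro f
    apply Subtype.ext
    funext x
    set evx : (ind Q S : Type) →ₗ[k] (S : Type) :=
      (LinearMap.proj x).comp (indV Q S).subtype with hevx
    have hevapp : ∀ w : (ind Q S : Type), evx w = w.1 x := fun w => rfl
    have hsum : (tr (ind Q S) Q θ f).1 x = ∑ C : RQ Q, ((cj (ind Q S) C.out θ f).1 x) := by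
      rw [← hevapp, tr, LinearMap.sum_apply, map_sum]
      exact Finset.sum_congr rfl fun C _ => rfl
    rw [hsum]
    have hterm : ∀ C : RQ Q, ((cj (ind Q S) C.out θ f).1 x)
        = if hx : x * C.out⁻¹ ∈ Q then S.ρ ⟨x * C.out⁻¹, hx⟩ (f.1 C.out) else 0 := by
      intro C
      set z := C.out
      have h1 : (cj (ind Q S) z θ f).1 x = (θ ((ind Q S).ρ z f)).1 (x * z⁻¹) := rfl
      rw [h1, θapply]
      have h2 : ((ind Q S).ρ z f).1 1 = f.1 (1 * z) := rfl
      rw [h2, one_mul]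
    rw [Finset.sum_congr rfl fun C _ => hterm C]
    have hmain : (Quotient.mk'' x : RQ Q) ∈ (Finset.univ : Finset (RQ Q)) := Finset.mem_univ _
    rw [Finset.sum_eq_single_of_mem (Quotient.mk'' x : RQ Q) hmain, ]
    · set z := (Quotient.mk'' x : RQ Q).out with hz
      have hrel : z * x⁻¹ ∈ Q := out_rel Q x
      have hx' : x * z⁻¹ ∈ Q := by
        have h3 := Q.inv_mem hrel
        simpa using h3
      rw [dif_pos hx']
      have h4 : f.1 x = f.1 (↑(⟨x * z⁻¹, hx'⟩ : ↥Q) * z) := by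
        congr 1
        group
      have h5 : (1 : Module.End k (ind Q S : Type)) f = f := rfl
      rw [h5, h4, ind_mem]
    · intro C _ hC
      rw [dif_neg]
      intro hc
      apply hC
      have h6 : (Quotient.mk'' C.out : RQ Q) = Quotient.mk'' x := mkQ_eq_of_rel hc
      rw [← h6]
      exact (Quotient.out_eq' C).symm
  -- transport θ to M via i and p
  set ψ : Module.End k M := hmap p ∘ₗ θ ∘ₗ hmap i with hψ
  have sandwich : ∀ z : G, cj M z ψ = hmap p ∘ₗ cj (ind Q S) z θ ∘ₗ hmap i := by
    intro z
    apply LinearMap.ext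
    intro m
    show M.ρ z⁻¹ (hmap p (θ (hmap i (M.ρ z m))))
        = hmap p ((ind Q S).ρ z⁻¹ (θ ((ind Q S).ρ z (hmap i m))))
    rw [hmap_comm_apply i z m, hmap_comm_apply p z⁻¹]
  refine ⟨ψ, ?_, ?_⟩
  · intro q hq
    rw [sandwich q, θequiv q hq]
  · have htr : tr M Q ψ = hmap p ∘ₗ tr (ind Q S) Q θ ∘ₗ hmap i := by
      rw [tr, tr]
      apply LinearMap.ext
      intro m
      rw [LinearMap.sum_apply]
      have h1 : ∀ C : RQ Q, cj M C.out ψ m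
          = hmap p (cj (ind Q S) C.out θ (hmap i m)) := by
        intro C
        rw [sandwich C.out]
        rfl
      rw [Finset.sum_congr rfl fun C _ => h1 C]
      show _ = hmap p ((∑ C : RQ Q, cj (ind Q S) C.out θ) (hmap i m))
      rw [LinearMap.sum_apply, map_sum]
    rw [htr, θtr]
    have : hmap p ∘ₗ (1 : Module.End k (ind Q S : Type)) ∘ₗ hmap i = hmap (i ≫ p) := rfl
    rw [this, hip, hmap_id]
    rfl

lemma hEquiv_mul {M : FDRep k G} {R : Subgroup G} {w θ : Module.End k M}
    (hw : GEquiv M w) (hθ : HEquiv M R θ) : HEquiv M R (w * θ) := by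
  intro r hr
  rw [cj_mul, hw r, hθ r hr]

lemma exists_inverse {M : FDRep k G} {u : Module.End k M} (h : Function.Bijective u)
    (hu : GEquiv M u) : ∃ w : Module.End k M, GEquiv M w ∧ w * u = 1 ∧ u * w = 1 := by
  set e := LinearEquiv.ofBijective u h with he
  set w : Module.End k M := e.symm.toLinearMap with hwdef
  have hwu : w * u = 1 := by
    apply LinearMap.ext; intro x
    show e.symm (e x) = x
    exact e.symm_apply_apply x
  have huw : u * w = 1 := by
    apply LinearMap.ext; intro x
    show e (e.symm x) = x
    exact e.apply_symm_apply x
  refine ⟨w, ?_, hwu, huw⟩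
  intro g
  have h1 : cj M g w * u = 1 := by
    show (M.ρ g⁻¹ * w * M.ρ g) * u = 1
    have hgu : M.ρ g * u = u * M.ρ g := (gEquiv_comm hu g).symm
    calc (M.ρ g⁻¹ * w * M.ρ g) * u = M.ρ g⁻¹ * w * (M.ρ g * u) := by rw [mul_assoc]
    _ = M.ρ g⁻¹ * w * (u * M.ρ g) := by rw [hgu]
    _ = M.ρ g⁻¹ * (w * u) * M.ρ g := by rw [mul_assoc, mul_assoc, mul_assoc]
    _ = 1 := by rw [hwu, mul_one, ← map_mul]; simp
  calc cj M g w = cj M g w * (u * w) := by rw [huw, mul_one]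
  _ = (cj M g w * u) * w := by rw [mul_assoc]
  _ = w := by rw [h1, one_mul]

end Induced

/-- If `M` is indecomposable with vertex `Q` and `H ≤ G` contains no
`G`-conjugate of `Q`, then the Auslander–Reiten sequence `0 → Ω²(M) → N → M → 0`
terminating in `M` splits upon restriction to `H`. -/
theorem AR_sequence_splits_on_restriction {k G : Type} [Field k] [Group G] [Fintype G]
    (p : ℕ) [Fact p.Prime] [CharP k p]
    (M : FDRep k G) (hM : Indec M)
    (Q : Subgroup G) (hQp : IsPGroup p ↥Q) (hvx : IsVertex M Q)
    (H : Subgroup G)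
    (hH : ∀ g : G, ¬ Subgroup.map (MulAut.conj g).toMonoidHom Q ≤ H)
    (h : Heller k G) (E : FDRep k G) (f : h.Ω 2 M ⟶ E) (g : E ⟶ M)
    (hAR : AlmostSplit f g) :
    ∃ s : res H M ⟶ res H E,
      s ≫ (Action.res (FGModuleCat k) H.subtype).map g = 𝟙 (res H M)     := by
  classical
  set X := ind H (res H M) with hXdef
  set φmk : (s : M ⟶ X) → Module.End k M := fun s =>
    { toFun := fun m => (hmap s m).1 1
      map_add' := fun a b => by
        show (hmap s (a + b)).1 1 = (hmap s a).1 1 + (hmap s b).1 1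
        rw [map_add]
        rfl
      map_smul' := fun c a => by
        show (hmap s (c • a)).1 1 = c • (hmap s a).1 1
        rw [map_smul]
        rfl } with hφmk
  have hnotsplit : ¬ ∃ s : M ⟶ X, s ≫ counit H M = 𝟙 M := by
    rintro ⟨s, hs⟩
    set φ : Module.End k M := φmk s with hφdef
    have hφapp : ∀ m : M, φ m = (hmap s m).1 1 := fun m => rfl
    have hφe : HEquiv M H φ := by
      intro h hh
      apply LinearMap.ext
      intro m
      show M.ρ h⁻¹ (φ (M.ρ h m)) = φ m
      have e1 : φ (M.ρ h m) = (hmap s (M.ρ h m)).1 1 := rfl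
      have e2 : hmap s (M.ρ h m) = X.ρ h (hmap s m) := hmap_comm_apply s h m
      have e3 : (X.ρ h (hmap s m)).1 1 = (hmap s m).1 (1 * h) := rfl
      have e4 : (hmap s m).1 (1 * h) = (hmap s m).1 (↑(⟨h, hh⟩ : ↥H) * 1) := by
        rw [one_mul, mul_one]
      have e5 : (hmap s m).1 (↑(⟨h, hh⟩ : ↥H) * 1)
          = (res H M).ρ ⟨h, hh⟩ ((hmap s m).1 1) := ind_mem H (res H M) (hmap s m) ⟨h, hh⟩ 1
      rw [e1, e2, e3, e4, e5]
      show M.ρ h⁻¹ (M.ρ h (φ m)) = φ m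
      have e6 : M.ρ h⁻¹ (M.ρ h (φ m)) = (M.ρ h⁻¹ * M.ρ h) (φ m) := rfl
      rw [e6, ← map_mul]
      simp
    have hφtr : tr M H φ = 1 := by
      apply LinearMap.ext
      intro m
      have h1 : ∀ C : RQ H, cj M C.out φ m = cosetEval H M C.out (hmap s m) := by
        intro C
        show M.ρ (C.out)⁻¹ (φ (M.ρ C.out m)) = M.ρ (C.out)⁻¹ ((hmap s m).1 C.out)
        congr 1
        have e2 : hmap s (M.ρ C.out m) = X.ρ C.out (hmap s m) := hmap_comm_apply s C.out m
        show (hmap s (M.ρ C.out m)).1 1 = _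
        rw [e2]
        show (hmap s m).1 (1 * C.out) = (hmap s m).1 C.out
        rw [one_mul]
      rw [tr, LinearMap.sum_apply, Finset.sum_congr rfl fun C _ => h1 C]
      have h2 : ∑ C : RQ H, cosetEval H M C.out (hmap s m) = counitMap H M (hmap s m) := by
        rw [counitMap, LinearMap.sum_apply]
      rw [h2]
      have h3 : counitMap H M (hmap s m) = hmap (s ≫ counit H M) m := rfl
      rw [h3, hs, hmap_id]
      rfl
    obtain ⟨ψ, hψe, hψtr⟩ := tr_of_relProj Q hvx.1
    have hone : (1 : Module.End k M)
        = ∑ D : DQ H Q, tr M (dsub D.out H Q) (cj M D.out φ * ψ) := by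
      rw [← mackey H Q φ ψ hφe hψe, hφtr, hψtr, one_mul]
    have hnotbij : ∀ D : DQ H Q,
        ¬ Function.Bijective (tr M (dsub D.out H Q) (cj M D.out φ * ψ)) := by
      intro D hbij
      set g0 := D.out with hg0
      set R := dsub g0 H Q with hR
      have hRe : HEquiv M R (cj M g0 φ * ψ) := hEquiv_dsub hφe hψe g0
      have hcg : GEquiv M (tr M R (cj M g0 φ * ψ)) := tr_gequiv hRe
      obtain ⟨w, hwG, hwu, huw⟩ := exists_inverse hbij hcg
      have h1 : tr M R (w * (cj M g0 φ * ψ)) = 1 := by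
        rw [tr_mul_left hwG, hwu]
      have hRproj : RelProj M R := relProj_of_tr R _ (hEquiv_mul hwG hRe) h1
      have hRQ : R = Q := hvx.2 R (dsub_le g0 H Q) hRproj
      apply hH g0
      rintro y ⟨q, hq, rfl⟩
      have hqR : q ∈ R := by rw [hRQ]; exact hq
      have hmem := (mem_dsub.mp hqR).1
      simpa [MulAut.conj] using hmem
    have hnilp : IsNilpotent
        (∑ D : DQ H Q, tr M (dsub D.out H Q) (cj M D.out φ * ψ)) := by
      apply nilp_sum hM
      · intro D _
        exact tr_gequiv (hEquiv_dsub hφe hψe D.out)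
      · intro D _
        rcases nilp_or_bij hM (tr_gequiv (hEquiv_dsub hφe hψe D.out)) with hn | hb
        · exact hn
        · exact absurd hb (hnotbij D)
    exact one_not_nilp hM.1 (by rw [hone]; exact hnilp)
  obtain ⟨v, hv⟩ := hAR.2.2 X (counit H M) hnotsplit
  have hkey : ∀ (h : ↥H) (m : M), eEltMap H M (M.ρ ↑h m) = X.ρ ↑h (eEltMap H M m) := by
    intro h m
    apply Subtype.ext
    funext x
    have hr : (X.ρ ↑h (eEltMap H M m)).1 x = (eEltMap H M m).1 (x * ↑h) := rfl
    rw [hr, eEltMap_apply, eEltMap_apply]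
    by_cases hx : x ∈ H
    · rw [if_pos hx, if_pos (H.mul_mem hx h.2)]
      have hmm : M.ρ (x * ↑h) m = M.ρ x (M.ρ ↑h m) := by rw [map_mul]; rfl
      rw [hmm]
    · rw [if_neg hx, if_neg ?_]
      intro hc
      apply hx
      have h2 := H.mul_mem hc (H.inv_mem h.2)
      simpa [mul_assoc] using h2
  set slin : (res H M : Type) →ₗ[k] (res H E : Type) := (hmap v).comp (eEltMap H M)
    with hslin
  have scomm : ∀ h : ↥H, slin ∘ₗ (res H M).ρ h = (res H E).ρ h ∘ₗ slin := by
    intro h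
    apply LinearMap.ext
    intro m
    show hmap v (eEltMap H M (M.ρ ↑h m)) = E.ρ ↑h (hmap v (eEltMap H M m))
    rw [hkey h m, hmap_comm_apply v ↑h]
  refine ⟨mkHom slin scomm, ?_⟩
  apply hom_ext
  apply LinearMap.ext
  intro m
  show hmap g (hmap v (eEltMap H M m)) = m
  have h1 : hmap g (hmap v (eEltMap H M m)) = hmap (v ≫ g) (eEltMap H M m) := rfl
  rw [h1, hv]
  show counitMap H M (eEltMap H M m) = m
  rw [counitMap, LinearMap.sum_apply,
    Finset.sum_eq_single_of_mem (Quotient.mk'' (1 : G) : RQ H) (Finset.mem_univ _)]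
  · set z := (Quotient.mk'' (1 : G) : RQ H).out with hz
    have hzH : z ∈ H := by
      have h2 := out_rel H (1 : G)
      simpa using h2
    show M.ρ z⁻¹ ((eEltMap H M m).1 z) = m
    rw [show (eEltMap H M m).1 z = M.ρ z m from (eEltMap_apply H M m z).trans (if_pos hzH)]
    have h3 : M.ρ z⁻¹ (M.ρ z m) = (M.ρ z⁻¹ * M.ρ z) m := rfl
    rw [h3, ← map_mul]
    simp
    rfl
  · intro C _ hC
    show M.ρ (C.out)⁻¹ ((eEltMap H M m).1 C.out) = 0
    rw [show (eEltMap H M m).1 C.out = 0 from (eEltMap_apply H M m C.out).trans (if_neg ?_)]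
    exact map_zero (M.ρ C.out⁻¹)
    intro hc
    apply hC
    have h6 : (Quotient.mk'' C.out : RQ H) = Quotient.mk'' (1 : G) :=
      mkQ_eq_of_rel (by simpa using H.inv_mem hc)
    rw [← h6]
    exact (Quotient.out_eq' C).symm


end AlgMod
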